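/- For a Wigner Hermitian matrix M_n with n odd, the expected determinant E[det M_n] equals 0; for n even, E[det M_n] = (-1)^{n/2} · n! / ((n/2)! · 2^{n/2}). -/

import Mathlib

open MeasureTheory ProbabilityTheory Finset


lemma integral_mul_c {Ω : Type*} [MeasurableSpace Ω] {μ : Measure Ω} {X Y : Ω → ℂ}
    (h : IndepFun X Y μ) (hX : Integrable X μ) (hY : Integrable Y μ) :
    ∫ ω, X ω * Y ω ∂μ = (∫ ω, X ω ∂μ) * ∫ ω, Y ω ∂μ := by
  have hre : Measurable Complex.re := Complex.measurable_re
  have him : Measurable Complex.im := Complex.measurable_im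
  have hac : Integrable (fun ω => (X ω).re * (Y ω).re) μ :=
    (h.comp hre hre).integrable_mul hX.re hY.re
  have hbd : Integrable (fun ω => (X ω).im * (Y ω).im) μ :=
    (h.comp him him).integrable_mul hX.im hY.im
  have had : Integrable (fun ω => (X ω).re * (Y ω).im) μ :=
    (h.comp hre him).integrable_mul hX.re hY.im
  have hbc : Integrable (fun ω => (X ω).im * (Y ω).re) μ :=
    (h.comp him hre).integrable_mul hX.im hY.re
  have hXY : Integrable (fun ω => X ω * Y ω) μ := h.integrable_mul hX hY
  have e1 : ∫ ω, (X ω).re ∂μ = (∫ ω, X ω ∂μ).re := integral_re hX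
  have e2 : ∫ ω, (X ω).im ∂μ = (∫ ω, X ω ∂μ).im := integral_im hX
  have e3 : ∫ ω, (Y ω).re ∂μ = (∫ ω, Y ω ∂μ).re := integral_re hY
  have e4 : ∫ ω, (Y ω).im ∂μ = (∫ ω, Y ω ∂μ).im := integral_im hY
  have m1 : ∫ ω, (X ω).re * (Y ω).re ∂μ = (∫ ω, (X ω).re ∂μ) * ∫ ω, (Y ω).re ∂μ :=
    (h.comp hre hre).integral_fun_mul_eq_mul_integral hX.re.1 hY.re.1
  have m2 : ∫ ω, (X ω).im * (Y ω).im ∂μ = (∫ ω, (X ω).im ∂μ) * ∫ ω, (Y ω).im ∂μ :=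
    (h.comp him him).integral_fun_mul_eq_mul_integral hX.im.1 hY.im.1
  have m3 : ∫ ω, (X ω).re * (Y ω).im ∂μ = (∫ ω, (X ω).re ∂μ) * ∫ ω, (Y ω).im ∂μ :=
    (h.comp hre him).integral_fun_mul_eq_mul_integral hX.re.1 hY.im.1
  have m4 : ∫ ω, (X ω).im * (Y ω).re ∂μ = (∫ ω, (X ω).im ∂μ) * ∫ ω, (Y ω).re ∂μ :=
    (h.comp him hre).integral_fun_mul_eq_mul_integral hX.im.1 hY.re.1
  have eXY1 : ∫ ω, (X ω * Y ω).re ∂μ = (∫ ω, X ω * Y ω ∂μ).re := integral_re hXY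
  have eXY2 : ∫ ω, (X ω * Y ω).im ∂μ = (∫ ω, X ω * Y ω ∂μ).im := integral_im hXY
  apply Complex.ext
  · rw [← eXY1, Complex.mul_re]
    rw [show (fun ω => (X ω * Y ω).re) = fun ω => (X ω).re * (Y ω).re - (X ω).im * (Y ω).im from
      funext fun ω => Complex.mul_re _ _]
    rw [integral_sub hac hbd, m1, m2, e1, e2, e3, e4]
  · rw [← eXY2, Complex.mul_im]
    rw [show (fun ω => (X ω * Y ω).im) = fun ω => (X ω).re * (Y ω).im + (X ω).im * (Y ω).re from
      funext fun ω => Complex.mul_im _ _]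
    rw [integral_add had hbc, m3, m4, e1, e2, e3, e4]

lemma indep_prod_integral {Ω : Type*} [MeasurableSpace Ω] {μ : Measure Ω} [IsProbabilityMeasure μ]
    {ι : Type*} [DecidableEq ι] {f : ι → Ω → ℂ}
    (hindep : iIndepFun f μ) (hmeas : ∀ i, Measurable (f i))
    (hint : ∀ i, Integrable (f i) μ) (s : Finset ι) :
    Integrable (fun ω => ∏ i ∈ s, f i ω) μ ∧
      ∫ ω, ∏ i ∈ s, f i ω ∂μ = ∏ i ∈ s, ∫ ω, f i ω ∂μ := by
  induction s using Finset.induction_on with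
  | empty => simp
  | @insert a s ha ih =>
    have hps : IndepFun (∏ j ∈ s, f j) (f a) μ :=
      hindep.indepFun_finsetProd_of_notMem hmeas ha
    have hps' : IndepFun (f a) (fun ω => ∏ j ∈ s, f j ω) μ := by
      have : (∏ j ∈ s, f j) = fun ω => ∏ j ∈ s, f j ω := by
        funext ω; simp [Finset.prod_apply]
      rw [this] at hps
      exact hps.symm
    have hintp : Integrable (fun ω => ∏ j ∈ s, f j ω) μ := ih.1
    constructor
    · have := hps'.integrable_mul (hint a) hintp
      have this : Integrable (fun ω => f a ω * ∏ j ∈ s, f j ω) μ := this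
      have e : (fun ω => ∏ i ∈ insert a s, f i ω) = fun ω => f a ω * ∏ j ∈ s, f j ω := by
        funext ω; rw [Finset.prod_insert ha]
      rw [e]
      exact this
    · have e : (fun ω => ∏ i ∈ insert a s, f i ω) = fun ω => f a ω * ∏ j ∈ s, f j ω := by
        funext ω; rw [Finset.prod_insert ha]
      rw [e, Finset.prod_insert ha, ← ih.2]
      exact integral_mul_c hps' (hint a) hintp



section
variable {α : Type*} [Fintype α] [DecidableEq α]

def fpfInv (α : Type*) [Fintype α] [DecidableEq α] : Finset (Equiv.Perm α) :=
  Finset.univ.filter (fun σ => ∀ x, σ (σ x) = x ∧ σ x ≠ x)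

lemma mem_fpfInv {σ : Equiv.Perm α} :
    σ ∈ fpfInv α ↔ ∀ x, σ (σ x) = x ∧ σ x ≠ x := by
  simp [fpfInv]

lemma fpfInv_support_eq {σ : Equiv.Perm α} (h : σ ∈ fpfInv α) :
    σ.support = Finset.univ := by
  ext x
  simp [Equiv.Perm.mem_support, (mem_fpfInv.1 h x).2]

lemma fpfInv_sq {σ : Equiv.Perm α} (h : σ ∈ fpfInv α) : σ ^ 2 = 1 := by
  ext x
  simp [pow_two, (mem_fpfInv.1 h x).1]

lemma fpfInv_two_dvd {σ : Equiv.Perm α} (h : σ ∈ fpfInv α) : 2 ∣ Fintype.card α := by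
  have := Equiv.Perm.two_dvd_card_support (fpfInv_sq h)
  rwa [fpfInv_support_eq h, Finset.card_univ] at this

lemma fpfInv_cycleType {σ : Equiv.Perm α} (h : σ ∈ fpfInv α) :
    σ.cycleType = Multiset.replicate (Fintype.card α / 2) 2 := by
  have h2 : ∀ c ∈ σ.cycleType, c = 2 := by
    intro c hc
    have hdvd : c ∣ 2 := (Equiv.Perm.dvd_of_mem_cycleType hc).trans
      (orderOf_dvd_of_pow_eq_one (fpfInv_sq h))
    have hle : 2 ≤ c := Equiv.Perm.two_le_of_mem_cycleType hc
    exact le_antisymm (Nat.le_of_dvd two_pos hdvd) hle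
  have hsum : σ.cycleType.sum = Fintype.card α := by
    rw [Equiv.Perm.sum_cycleType, fpfInv_support_eq h, Finset.card_univ]
  have hcard : Multiset.card σ.cycleType = Fintype.card α / 2 := by
    have e1 : σ.cycleType.map id = σ.cycleType.map (fun _ => 2) :=
      Multiset.map_congr rfl (fun c hc => h2 c hc)
    have : σ.cycleType.sum = 2 * Multiset.card σ.cycleType := by
      have := congrArg Multiset.sum e1
      simpa [mul_comm] using this
    omega
  rw [Multiset.eq_replicate]
  exact ⟨hcard, h2⟩

lemma fpfInv_sign {σ : Equiv.Perm α} (h : σ ∈ fpfInv α) :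
    Equiv.Perm.sign σ = (-1 : ℤˣ) ^ (Fintype.card α / 2) := by
  rw [Equiv.Perm.sign_of_cycleType, fpfInv_cycleType h]
  simp only [Multiset.sum_replicate, Multiset.card_replicate, smul_eq_mul]
  obtain ⟨m, hm⟩ := fpfInv_two_dvd h
  rw [hm]
  simp only [Nat.mul_div_cancel_left _ two_pos]
  rw [pow_add, pow_mul]
  simp

end

variable {n : ℕ} {y : Fin (n+2)}

def fwdPerm (σ : Equiv.Perm (Fin (n+2)))
    (h : ∀ z : {z : Fin (n+2) // z ≠ 0 ∧ z ≠ y}, σ z.1 ≠ 0 ∧ σ z.1 ≠ y)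
    (hinv : ∀ x, σ (σ x) = x) : Equiv.Perm {z : Fin (n+2) // z ≠ 0 ∧ z ≠ y} :=
  ⟨fun z => ⟨σ z.1, h z⟩, fun z => ⟨σ z.1, h z⟩,
   fun z => Subtype.ext (hinv z.1), fun z => Subtype.ext (hinv z.1)⟩

def backFun (y : Fin (n+2)) (τ : Equiv.Perm {z : Fin (n+2) // z ≠ 0 ∧ z ≠ y}) :
    Fin (n+2) → Fin (n+2) :=
  fun z => if h0 : z = 0 then y else if hy' : z = y then 0 else (τ ⟨z, h0, hy'⟩).1

lemma backFun_invol (hy : y ≠ 0) (τ : Equiv.Perm {z : Fin (n+2) // z ≠ 0 ∧ z ≠ y})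
    (hτ : ∀ z, τ (τ z) = z) : ∀ z, backFun y τ (backFun y τ z) = z := by
  intro z
  unfold backFun
  by_cases h0 : z = 0
  · subst h0
    rw [dif_pos rfl, dif_neg hy, dif_pos rfl]
  · by_cases hy' : z = y
    · subst hy'
      rw [dif_neg h0, dif_pos rfl, dif_pos rfl]
    · rw [dif_neg h0, dif_neg hy', dif_neg (τ ⟨z, h0, hy'⟩).2.1, dif_neg (τ ⟨z, h0, hy'⟩).2.2]
      have := congrArg Subtype.val (hτ ⟨z, h0, hy'⟩)
      simpa using this

def backPerm (hy : y ≠ 0) (τ : Equiv.Perm {z : Fin (n+2) // z ≠ 0 ∧ z ≠ y})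
    (hτ : ∀ z, τ (τ z) = z) : Equiv.Perm (Fin (n+2)) :=
  ⟨backFun y τ, backFun y τ, backFun_invol hy τ hτ, backFun_invol hy τ hτ⟩

lemma fpfInv_fiber_card (n : ℕ) (y : Fin (n+2)) (hy : y ≠ 0) :
    ((fpfInv (Fin (n+2))).filter (fun σ => σ 0 = y)).card
      = (fpfInv {z : Fin (n+2) // z ≠ 0 ∧ z ≠ y}).card := by
  have key : ∀ σ ∈ (fpfInv (Fin (n+2))).filter (fun σ => σ 0 = y),
      ∀ z : {z : Fin (n+2) // z ≠ 0 ∧ z ≠ y}, σ z.1 ≠ 0 ∧ σ z.1 ≠ y := by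
    intro σ hσ z
    rw [Finset.mem_filter, mem_fpfInv] at hσ
    constructor
    · intro h
      have : σ (σ z.1) = σ 0 := by rw [h]
      rw [(hσ.1 z.1).1, hσ.2] at this
      exact z.2.2 this
    · intro h
      have h2 : σ (σ z.1) = σ y := by rw [h]
      rw [(hσ.1 z.1).1] at h2
      have hσy : σ y = 0 := by
        have := congrArg σ hσ.2
        rw [(hσ.1 0).1] at this
        exact this.symm
      rw [hσy] at h2
      exact z.2.1 h2
  refine Finset.card_bij'
    (fun σ hσ => fwdPerm σ (key σ hσ)
      (fun x => ((mem_fpfInv.1 (Finset.mem_filter.1 hσ).1) x).1))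
    (fun τ hτ => backPerm hy τ (fun z => (mem_fpfInv.1 hτ z).1)) ?_ ?_ ?_ ?_
  · -- forward membership
    intro σ hσ
    rw [mem_fpfInv]
    intro z
    have h1 := mem_fpfInv.1 (Finset.mem_filter.1 hσ).1
    constructor
    · exact Subtype.ext ((h1 z.1).1)
    · intro h
      exact (h1 z.1).2 (congrArg Subtype.val h)
  · -- backward membership
    intro τ hτ
    have h1 := mem_fpfInv.1 hτ
    rw [Finset.mem_filter, mem_fpfInv]
    refine ⟨?_, ?_⟩
    · intro x
      refine ⟨(backPerm hy τ _).left_inv x, ?_⟩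
      show backFun y τ x ≠ x
      unfold backFun
      by_cases h0 : x = 0
      · simp only [h0, dif_pos rfl]; exact hy
      · by_cases hy' : x = y
        · simp only [hy', dif_neg hy, dif_pos rfl]
          exact fun h => hy h.symm
        · rw [dif_neg h0, dif_neg hy']
          intro h
          exact (h1 ⟨x, h0, hy'⟩).2 (Subtype.ext h)
    · show backFun y τ 0 = y
      unfold backFun
      simp
  · -- left inverse
    intro σ hσ
    refine Equiv.ext fun x => ?_
    simp only [backPerm, fwdPerm, Equiv.coe_fn_mk]
    have h1 := mem_fpfInv.1 (Finset.mem_filter.1 hσ).1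
    have h0y : σ 0 = y := (Finset.mem_filter.1 hσ).2
    unfold backFun
    by_cases h0 : x = 0
    · rw [dif_pos h0, h0, h0y]
    · by_cases hy' : x = y
      · rw [dif_neg h0, dif_pos hy', hy']
        have := congrArg σ h0y
        rw [(h1 0).1] at this
        exact this
      · rw [dif_neg h0, dif_neg hy']
        rfl
  · -- right inverse
    intro τ hτ
    refine Equiv.ext fun z => ?_
    simp only [fwdPerm, backPerm, Equiv.coe_fn_mk]
    refine Subtype.ext ?_
    show backFun y τ z.1 = (τ z).1
    unfold backFun
    rw [dif_neg z.2.1, dif_neg z.2.2]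


lemma card_ne_ne (n : ℕ) (y : Fin (n+2)) (hy : y ≠ 0) :
    Fintype.card {z : Fin (n+2) // z ≠ 0 ∧ z ≠ y} = n := by
  rw [Fintype.card_subtype]
  have h : Finset.univ.filter (fun z : Fin (n+2) => z ≠ 0 ∧ z ≠ y)
      = Finset.univ \ {0, y} := by
    ext z; simp [not_or]
  rw [h, Finset.card_sdiff_of_subset (by simp), Finset.card_pair (Ne.symm hy)]
  simp

lemma fpfInv_card_congr {α β : Type*} [Fintype α] [DecidableEq α] [Fintype β] [DecidableEq β]
    (e : α ≃ β) : (fpfInv α).card = (fpfInv β).card := by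
  refine Finset.card_bij' (fun σ _ => e.permCongr σ) (fun τ _ => e.permCongr.symm τ) ?_ ?_ ?_ ?_
  · intro σ hσ
    rw [mem_fpfInv] at hσ ⊢
    intro x
    refine ⟨?_, ?_⟩
    · simp [Equiv.permCongr_apply, (hσ (e.symm x)).1]
    · simp only [Equiv.permCongr_apply, ne_eq]
      intro h
      apply (hσ (e.symm x)).2
      have := congrArg e.symm h
      simpa using this
  · intro τ hτ
    rw [mem_fpfInv] at hτ ⊢
    intro x
    refine ⟨?_, ?_⟩
    · simp [Equiv.permCongr_symm_apply, (hτ (e x)).1]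
    · simp only [Equiv.permCongr_symm_apply, ne_eq]
      intro h
      apply (hτ (e x)).2
      have := congrArg e h
      simpa using this
  · intro σ _
    ext x; simp
  · intro τ _
    ext x; simp

lemma fpfInv_rec (n : ℕ) :
    (fpfInv (Fin (n+2))).card = (n+1) * (fpfInv (Fin n)).card := by
  rw [Finset.card_eq_sum_card_fiberwise
    (f := fun σ : Equiv.Perm (Fin (n+2)) => σ 0) (t := Finset.univ.erase 0)
    (fun σ hσ => Finset.mem_erase.2 ⟨(mem_fpfInv.1 hσ 0).2, Finset.mem_univ _⟩)]
  have hterm : ∀ y ∈ Finset.univ.erase (0 : Fin (n+2)),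
      ((fpfInv (Fin (n+2))).filter (fun σ => σ 0 = y)).card = (fpfInv (Fin n)).card := by
    intro y hy
    have hy0 : y ≠ 0 := (Finset.mem_erase.1 hy).1
    rw [fpfInv_fiber_card n y hy0]
    exact fpfInv_card_congr (Fintype.equivFinOfCardEq (card_ne_ne n y hy0))
  rw [Finset.sum_congr rfl hterm, Finset.sum_const, smul_eq_mul]
  congr 1
  rw [Finset.card_erase_of_mem (Finset.mem_univ _)]
  simp

lemma fpfInv_card_fin_zero : (fpfInv (Fin 0)).card = 1 := by
  have h : fpfInv (Fin 0) = Finset.univ :=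
    Finset.eq_univ_of_forall (fun σ => mem_fpfInv.2 (fun x => x.elim0))
  rw [h, Finset.card_univ]
  simp

lemma fpfInv_count : ∀ m : ℕ,
    (fpfInv (Fin (2*m))).card * (Nat.factorial m * 2^m) = Nat.factorial (2*m) := by
  intro m
  induction m with
  | zero => simp [fpfInv_card_fin_zero]
  | succ m ih =>
    have h2 : 2 * (m+1) = (2*m) + 2 := by ring
    rw [h2, fpfInv_rec (2*m)]
    have hf : ((2*m)+2).factorial = ((2*m)+2) * (((2*m)+1) * (2*m).factorial) := by
      rw [show (2*m)+2 = ((2*m)+1)+1 from rfl, Nat.factorial_succ, Nat.factorial_succ]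
    rw [hf, Nat.factorial_succ, ← ih]
    ring

lemma fpfInv_empty_of_odd {n : ℕ} (hn : Odd n) : fpfInv (Fin n) = ∅ := by
  rw [Finset.eq_empty_iff_forall_notMem]
  intro σ hσ
  have h := fpfInv_two_dvd hσ
  rw [Fintype.card_fin] at h
  obtain ⟨k, hk⟩ := hn
  omega


section pairstuff
variable {n : ℕ}

abbrev PairIdx (n : ℕ) := {p : Fin n × Fin n // p.1 ≤ p.2}

def prI (σ : Equiv.Perm (Fin n)) (i : Fin n) : PairIdx n :=
  if h : σ i ≤ i then ⟨(σ i, i), h⟩ else ⟨(i, σ i), le_of_not_ge h⟩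

def fiberS (σ : Equiv.Perm (Fin n)) (p : PairIdx n) : Finset (Fin n) :=
  univ.filter (fun i => prI σ i = p)

lemma mem_fiberS {σ : Equiv.Perm (Fin n)} {p : PairIdx n} {i : Fin n} :
    i ∈ fiberS σ p ↔ prI σ i = p := by simp [fiberS]

lemma prI_eq_iff {σ : Equiv.Perm (Fin n)} {i : Fin n} {p : PairIdx n} :
    prI σ i = p ↔ (σ i ≤ i ∧ p.1 = (σ i, i)) ∨ (¬σ i ≤ i ∧ p.1 = (i, σ i)) := by
  unfold prI
  by_cases h : σ i ≤ i
  · rw [dif_pos h]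
    simp [h, Subtype.ext_iff, eq_comm]
  · rw [dif_neg h]
    simp [h, Subtype.ext_iff, eq_comm]

lemma fiberS_subset (σ : Equiv.Perm (Fin n)) (p : PairIdx n) :
    fiberS σ p ⊆ {p.1.1, p.1.2} := by
  intro i hi
  rw [mem_fiberS, prI_eq_iff] at hi
  rcases hi with ⟨_, h⟩ | ⟨_, h⟩
  · simp [h]
  · simp [h]

lemma fiberS_card_le (σ : Equiv.Perm (Fin n)) (p : PairIdx n) : (fiberS σ p).card ≤ 2 := by
  refine (Finset.card_le_card (fiberS_subset σ p)).trans ?_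
  refine (Finset.card_insert_le _ _).trans ?_
  simp

/-- fiber is empty when `σ p.1.1 ≠ p.1.2`, assuming `σ` is an involution -/
lemma fiberS_empty {σ : Equiv.Perm (Fin n)} (hinv : ∀ x, σ (σ x) = x) {p : PairIdx n}
    (hnm : σ p.1.1 ≠ p.1.2) : fiberS σ p = ∅ := by
  rw [Finset.eq_empty_iff_forall_notMem]
  intro i hi
  rw [mem_fiberS, prI_eq_iff] at hi
  rcases hi with ⟨_, h⟩ | ⟨_, h⟩
  · apply hnm
    have h1 : p.1.1 = σ i := congrArg Prod.fst h
    have h2 : p.1.2 = i := congrArg Prod.snd h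
    rw [h1, h2, hinv]
  · apply hnm
    have h1 : p.1.1 = i := congrArg Prod.fst h
    have h2 : p.1.2 = σ i := congrArg Prod.snd h
    rw [h1, h2]

/-- fiber of a matched pair, for a fixed-point-free involution -/
lemma fiberS_pair {σ : Equiv.Perm (Fin n)} (hinv : ∀ x, σ (σ x) = x) {p : PairIdx n}
    (hne : p.1.1 ≠ p.1.2) (hm : σ p.1.1 = p.1.2) :
    fiberS σ p = {p.1.1, p.1.2} := by
  have hlt : p.1.1 < p.1.2 := lt_of_le_of_ne p.2 hne
  have hm2 : σ p.1.2 = p.1.1 := by rw [← hm, hinv]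
  ext i
  rw [mem_fiberS, prI_eq_iff]
  simp only [Finset.mem_insert, Finset.mem_singleton]
  constructor
  · rintro (⟨_, h⟩ | ⟨_, h⟩)
    · exact Or.inr (congrArg Prod.snd h).symm
    · exact Or.inl (congrArg Prod.fst h).symm
  · rintro (rfl | rfl)
    · refine Or.inr ⟨?_, ?_⟩
      · rw [hm]; exact not_le_of_gt hlt
      · rw [hm]
    · refine Or.inl ⟨?_, ?_⟩
      · rw [hm2]; exact le_of_lt hlt
      · rw [hm2]

/-- fiber of the pair of a fixed point -/
lemma fiberS_fix {σ : Equiv.Perm (Fin n)} {i₀ : Fin n} (hfix : σ i₀ = i₀) :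
    fiberS σ (prI σ i₀) = {i₀} ∧ prI σ i₀ = ⟨(i₀, i₀), le_refl i₀⟩ := by
  have hp : prI σ i₀ = ⟨(i₀, i₀), le_refl i₀⟩ := by
    rw [prI_eq_iff]
    exact Or.inl ⟨by rw [hfix], by rw [hfix]⟩
  refine ⟨?_, hp⟩
  ext i
  rw [mem_fiberS, hp, prI_eq_iff, Finset.mem_singleton]
  constructor
  · rintro (⟨h1, h⟩ | ⟨h1, h⟩)
    · exact (congrArg Prod.snd h).symm
    · have : i = i₀ := (congrArg Prod.fst h).symm
      exact this
  · rintro rfl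
    exact Or.inl ⟨by rw [hfix], by rw [hfix]⟩

/-- fiber of the pair of a non-involutive point is a singleton -/
lemma fiberS_single {σ : Equiv.Perm (Fin n)} {i₀ : Fin n} (hne : σ i₀ ≠ i₀)
    (hni : σ (σ i₀) ≠ i₀) : fiberS σ (prI σ i₀) = {i₀} := by
  ext i
  rw [mem_fiberS, Finset.mem_singleton]
  constructor
  · intro h
    rw [prI_eq_iff] at h
    by_cases h0 : σ i₀ ≤ i₀
    · have hp : (prI σ i₀).1 = (σ i₀, i₀) := by
        unfold prI; rw [dif_pos h0]
      rcases h with ⟨h1, h⟩ | ⟨h1, h⟩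
      · rw [hp] at h
        exact (Prod.ext_iff.1 h).2.symm
      · rw [hp] at h
        exfalso
        apply hni
        have e1 : i = σ i₀ := (Prod.ext_iff.1 h).1.symm
        have e2 : σ i = i₀ := (Prod.ext_iff.1 h).2.symm
        rw [← e1, e2]
    · have hp : (prI σ i₀).1 = (i₀, σ i₀) := by
        unfold prI; rw [dif_neg h0]
      rcases h with ⟨h1, h⟩ | ⟨h1, h⟩
      · rw [hp] at h
        exfalso
        apply hni
        have e1 : σ i = i₀ := (Prod.ext_iff.1 h).1.symm
        have e2 : i = σ i₀ := (Prod.ext_iff.1 h).2.symm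
        rw [← e2, e1]
      · rw [hp] at h
        exact (Prod.ext_iff.1 h).1.symm
  · rintro rfl
    rfl

end pairstuff

section analysis
variable {Ω : Type*} [MeasurableSpace Ω] {μ : Measure Ω} [IsProbabilityMeasure μ]
  {n : ℕ} {ζ : Fin n → Fin n → Ω → ℂ}

def gfun (σ : Equiv.Perm (Fin n)) (p : PairIdx n) : ℂ → ℂ :=
  fun z => ∏ i ∈ fiberS σ p, (if σ i ≤ i then z else starRingEnd ℂ z)

lemma gfun_measurable (σ : Equiv.Perm (Fin n)) (p : PairIdx n) : Measurable (gfun σ p) := by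
  unfold gfun
  apply Finset.measurable_prod
  intro i _
  by_cases h : σ i ≤ i
  · simpa [h] using measurable_id'
  · simpa [h] using Complex.continuous_conj.measurable

lemma F_eq (hherm : ∀ i j ω, ζ j i ω = starRingEnd ℂ (ζ i j ω)) (σ : Equiv.Perm (Fin n))
    (p : PairIdx n) :
    (fun ω => ∏ i ∈ fiberS σ p, ζ (σ i) i ω)
      = (gfun σ p) ∘ (fun ω => ζ p.1.1 p.1.2 ω) := by
  funext ω
  simp only [Function.comp_apply, gfun]
  refine Finset.prod_congr rfl fun i hi => ?_
  have hp := mem_fiberS.1 hi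
  rw [prI_eq_iff] at hp
  rcases hp with ⟨h, hp⟩ | ⟨h, hp⟩
  · rw [if_pos h]
    have e1 : p.1.1 = σ i := congrArg Prod.fst hp
    have e2 : p.1.2 = i := congrArg Prod.snd hp
    rw [e1, e2]
  · rw [if_neg h]
    have e1 : p.1.1 = i := congrArg Prod.fst hp
    have e2 : p.1.2 = σ i := congrArg Prod.snd hp
    rw [e1, e2, ← hherm]

lemma integrable_prod_le_two {s : Finset (Fin n)} (hcard : s.card ≤ 2) (f : Fin n → Ω → ℂ)
    (hf2 : ∀ i, MemLp (f i) 2 μ) : Integrable (fun ω => ∏ i ∈ s, f i ω) μ := by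
  interval_cases h : s.card
  · rw [Finset.card_eq_zero] at h
    subst h
    simp only [Finset.prod_empty]
    exact integrable_const 1
  · rw [Finset.card_eq_one] at h
    obtain ⟨a, rfl⟩ := h
    simp only [Finset.prod_singleton]
    exact (hf2 a).integrable one_le_two
  · rw [Finset.card_eq_two] at h
    obtain ⟨a, b, hab, rfl⟩ := h
    have hm : MemLp (f a • f b) 1 μ :=
      (hf2 b).smul (hf2 a) (hpqr := ⟨by rw [inv_one]; exact ENNReal.inv_two_add_inv_two⟩)
    have := memLp_one_iff_integrable.1 hm
    have e : (f a • f b) = fun ω => f a ω * f b ω := by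
      funext ω; simp [Pi.smul_apply', smul_eq_mul]
    rw [e] at this
    simpa [Finset.prod_pair hab] using this

lemma integral_prod_entries
    (hmeas : ∀ i j, Measurable (ζ i j))
    (hherm : ∀ i j ω, ζ j i ω = starRingEnd ℂ (ζ i j ω))
    (hindep : iIndepFun
      (fun p : PairIdx n => ζ p.1.1 p.1.2) μ)
    (hL2 : ∀ i j, MemLp (ζ i j) 2 μ) (σ : Equiv.Perm (Fin n)) :
    Integrable (fun ω => ∏ i, ζ (σ i) i ω) μ ∧
    ∫ ω, ∏ i, ζ (σ i) i ω ∂μ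
      = ∏ p : PairIdx n, ∫ ω, ∏ i ∈ fiberS σ p, ζ (σ i) i ω ∂μ := by
  have hsplit : ∀ ω, ∏ i, ζ (σ i) i ω = ∏ p : PairIdx n, ∏ i ∈ fiberS σ p, ζ (σ i) i ω :=
    fun ω => (Finset.prod_fiberwise_of_maps_to
      (fun i _ => Finset.mem_univ (prI σ i)) (fun i => ζ (σ i) i ω)).symm
  set F := fun (p : PairIdx n) (ω : Ω) => ∏ i ∈ fiberS σ p, ζ (σ i) i ω with hF
  have hFcomp : F = fun p => (gfun σ p) ∘ (fun ω => ζ p.1.1 p.1.2 ω) :=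
    funext fun p => F_eq hherm σ p
  have hFindep : iIndepFun F μ := by
    rw [hFcomp]
    exact hindep.comp _ (fun p => gfun_measurable σ p)
  have hFmeas : ∀ p, Measurable (F p) := by
    intro p
    rw [hFcomp]
    exact (gfun_measurable σ p).comp (hmeas p.1.1 p.1.2)
  have hFint : ∀ p, Integrable (F p) μ := fun p =>
    integrable_prod_le_two (fiberS_card_le σ p) _ (fun i => hL2 (σ i) i)
  obtain ⟨hint, heq⟩ := indep_prod_integral hFindep hFmeas hFint Finset.univ
  constructor
  · rw [show (fun ω => ∏ i, ζ (σ i) i ω) = fun ω => ∏ p ∈ Finset.univ, F p ω from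
      funext hsplit]
    exact hint
  · rw [show (fun ω => ∏ i, ζ (σ i) i ω) = fun ω => ∏ p ∈ Finset.univ, F p ω from
      funext hsplit] at *
    rw [heq]

end analysis

section evaluation
variable {Ω : Type*} [MeasurableSpace Ω] {μ : Measure Ω} [IsProbabilityMeasure μ]
  {n : ℕ} {ζ : Fin n → Fin n → Ω → ℂ}

lemma integral_fiber_eq_one
    (hherm : ∀ i j ω, ζ j i ω = starRingEnd ℂ (ζ i j ω))
    (hvar : ∀ i j, i < j → ∫ ω, ‖ζ i j ω‖ ^ 2 ∂μ = 1)
    {σ : Equiv.Perm (Fin n)} (hinv : ∀ x, σ (σ x) = x) (hfpf : ∀ x, σ x ≠ x)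
    (p : PairIdx n) :
    ∫ ω, ∏ i ∈ fiberS σ p, ζ (σ i) i ω ∂μ = 1 := by
  by_cases hm : σ p.1.1 = p.1.2
  · have hne : p.1.1 ≠ p.1.2 := fun h => hfpf p.1.1 (h ▸ hm)
    have hlt : p.1.1 < p.1.2 := lt_of_le_of_ne p.2 hne
    have hm2 : σ p.1.2 = p.1.1 := by rw [← hm, hinv]
    have hbody : (fun ω => ∏ i ∈ fiberS σ p, ζ (σ i) i ω)
        = fun ω => ((‖ζ p.1.1 p.1.2 ω‖^2 : ℝ) : ℂ) := by
      funext ω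
      rw [fiberS_pair hinv hne hm, Finset.prod_pair hne, hm, hm2, hherm p.1.1 p.1.2 ω,
        mul_comm, Complex.mul_conj]
      simp [Complex.normSq_eq_norm_sq]
    rw [hbody]
    have hoc : ∫ ω, ((‖ζ p.1.1 p.1.2 ω‖^2 : ℝ) : ℂ) ∂μ
        = ((∫ ω, ‖ζ p.1.1 p.1.2 ω‖^2 ∂μ : ℝ) : ℂ) := integral_ofReal
    rw [hoc, hvar p.1.1 p.1.2 hlt]
    norm_num
  · have hbody : (fun ω => ∏ i ∈ fiberS σ p, ζ (σ i) i ω) = fun _ => (1 : ℂ) := by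
      funext ω
      rw [fiberS_empty hinv hm, Finset.prod_empty]
    rw [hbody]
    simp

lemma integral_fiber_eq_zero
    (hherm : ∀ i j ω, ζ j i ω = starRingEnd ℂ (ζ i j ω))
    (hmean : ∀ i j, i ≤ j → ∫ ω, ζ i j ω ∂μ = 0)
    {σ : Equiv.Perm (Fin n)} {i₀ : Fin n}
    (hbad : σ i₀ = i₀ ∨ (σ i₀ ≠ i₀ ∧ σ (σ i₀) ≠ i₀)) :
    ∫ ω, ∏ i ∈ fiberS σ (prI σ i₀), ζ (σ i) i ω ∂μ = 0 := by
  have hfib : fiberS σ (prI σ i₀) = {i₀} := by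
    rcases hbad with hfix | ⟨h1, h2⟩
    · exact (fiberS_fix hfix).1
    · exact fiberS_single h1 h2
  have hbody : (fun ω => ∏ i ∈ fiberS σ (prI σ i₀), ζ (σ i) i ω)
      = fun ω => ζ (σ i₀) i₀ ω := by
    funext ω
    rw [hfib, Finset.prod_singleton]
  rw [hbody]
  by_cases h0 : σ i₀ ≤ i₀
  · exact hmean (σ i₀) i₀ h0
  · have : (fun ω => ζ (σ i₀) i₀ ω) = fun ω => starRingEnd ℂ (ζ i₀ (σ i₀) ω) := by
      funext ω; exact hherm i₀ (σ i₀) ω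
    rw [this, integral_conj, hmean i₀ (σ i₀) (le_of_not_ge h0)]
    simp

end evaluation

/-- First moment of the determinant of a Wigner Hermitian matrix: it vanishes for odd `n`
and equals `(-1)^(n/2) n! / ((n/2)! 2^(n/2))` for even `n`. -/
theorem expected_det_wigner
    {Ω : Type*} [MeasurableSpace Ω] (μ : Measure Ω) [IsProbabilityMeasure μ]
    (n : ℕ) (ζ : Fin n → Fin n → Ω → ℂ)
    (hmeas : ∀ i j, Measurable (ζ i j))
    (hherm : ∀ i j ω, ζ j i ω = starRingEnd ℂ (ζ i j ω))
    (hdiag : ∀ i ω, (ζ i i ω).im = 0)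
    (hindep : iIndepFun
      (fun p : {p : Fin n × Fin n // p.1 ≤ p.2} => ζ p.1.1 p.1.2) μ)
    (hmean : ∀ i j, i ≤ j → ∫ ω, ζ i j ω ∂μ = 0)
    (hvar : ∀ i j, i < j → ∫ ω, ‖ζ i j ω‖ ^ 2 ∂μ = 1)
    (hL2 : ∀ i j, MemLp (ζ i j) 2 μ) :
    ∫ ω, Matrix.det (Matrix.of fun i j => ζ i j ω) ∂μ =
      if Odd n then 0
      else (-1 : ℂ) ^ (n / 2) * (Nat.factorial n : ℂ) / ((Nat.factorial (n / 2) : ℂ) * 2 ^ (n / 2)) := by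
  classical
  -- expand determinant
  have hdet : ∀ ω, Matrix.det (Matrix.of fun i j => ζ i j ω)
      = ∑ σ : Equiv.Perm (Fin n), ((Equiv.Perm.sign σ : ℤ) : ℂ) * ∏ i, ζ (σ i) i ω := by
    intro ω
    rw [Matrix.det_apply]
    refine Finset.sum_congr rfl fun σ _ => ?_
    rw [Units.smul_def, zsmul_eq_mul]
    norm_num
  have hent : ∀ σ : Equiv.Perm (Fin n),
      Integrable (fun ω => ∏ i, ζ (σ i) i ω) μ ∧
      ∫ ω, ∏ i, ζ (σ i) i ω ∂μ
        = ∏ p : PairIdx n, ∫ ω, ∏ i ∈ fiberS σ p, ζ (σ i) i ω ∂μ :=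
    fun σ => integral_prod_entries hmeas hherm hindep hL2 σ
  -- swap integral and sum
  have hswap : ∫ ω, Matrix.det (Matrix.of fun i j => ζ i j ω) ∂μ
      = ∑ σ : Equiv.Perm (Fin n),
          ((Equiv.Perm.sign σ : ℤ) : ℂ) * ∫ ω, ∏ i, ζ (σ i) i ω ∂μ := by
    rw [show (fun ω => Matrix.det (Matrix.of fun i j => ζ i j ω))
        = fun ω => ∑ σ : Equiv.Perm (Fin n),
            ((Equiv.Perm.sign σ : ℤ) : ℂ) * ∏ i, ζ (σ i) i ω from funext hdet]
    rw [integral_finset_sum _ (fun σ _ => ((hent σ).1.const_mul _))]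
    exact Finset.sum_congr rfl fun σ _ => integral_const_mul _ _
  -- evaluate each term
  have hval : ∀ σ : Equiv.Perm (Fin n),
      ∫ ω, ∏ i, ζ (σ i) i ω ∂μ = if σ ∈ fpfInv (Fin n) then 1 else 0 := by
    intro σ
    rw [(hent σ).2]
    by_cases hσ : σ ∈ fpfInv (Fin n)
    · rw [if_pos hσ]
      have h1 := fun x => (mem_fpfInv.1 hσ x).1
      have h2 := fun x => (mem_fpfInv.1 hσ x).2
      exact Finset.prod_eq_one fun p _ => integral_fiber_eq_one hherm hvar h1 h2 p
    · rw [if_neg hσ]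
      rw [mem_fpfInv] at hσ
      push_neg at hσ
      obtain ⟨i₀, hi₀⟩ := hσ
      have hbad : σ i₀ = i₀ ∨ (σ i₀ ≠ i₀ ∧ σ (σ i₀) ≠ i₀) := by
        by_cases hfix : σ i₀ = i₀
        · exact Or.inl hfix
        · exact Or.inr ⟨hfix, fun h => hfix (hi₀ h)⟩
      exact Finset.prod_eq_zero (Finset.mem_univ (prI σ i₀))
        (integral_fiber_eq_zero hherm hmean hbad)
  rw [hswap]
  have hsum : ∑ σ : Equiv.Perm (Fin n),
      ((Equiv.Perm.sign σ : ℤ) : ℂ) * ∫ ω, ∏ i, ζ (σ i) i ω ∂μ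
      = (fpfInv (Fin n)).card • ((-1 : ℂ) ^ (n / 2)) := by
    rw [← Finset.sum_subset (Finset.subset_univ (fpfInv (Fin n)))
      (fun σ _ hσ => by rw [hval σ, if_neg hσ, mul_zero])]
    rw [Finset.sum_congr rfl (fun σ hσ => ?_), Finset.sum_const]
    rw [hval σ, if_pos hσ, mul_one]
    have := fpfInv_sign hσ
    rw [Fintype.card_fin] at this
    rw [this]
    push_cast
    norm_num
  rw [hsum]
  by_cases hodd : Odd n
  · rw [if_pos hodd, fpfInv_empty_of_odd hodd]
    simp
  · rw [if_neg hodd]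
    have heven : Even n := Nat.not_odd_iff_even.1 hodd
    have hN : (fpfInv (Fin n)).card * (Nat.factorial (n/2) * 2^(n/2)) = Nat.factorial n := by
      obtain ⟨m, hm⟩ := heven
      have hm' : n = 2 * m := by omega
      subst hm'
      simpa [Nat.mul_div_cancel_left m two_pos] using fpfInv_count m
    have hne : ((Nat.factorial (n/2) : ℂ) * 2 ^ (n/2)) ≠ 0 :=
      mul_ne_zero (Nat.cast_ne_zero.2 (Nat.factorial_ne_zero _)) (pow_ne_zero _ two_ne_zero)
    rw [nsmul_eq_mul, eq_div_iff hne]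
    have : ((fpfInv (Fin n)).card * (Nat.factorial (n/2) * 2^(n/2)) : ℂ)
        = (Nat.factorial n : ℂ) := by exact_mod_cast congrArg (Nat.cast : ℕ → ℂ) hN
    calc (fpfInv (Fin n)).card * (-1 : ℂ)^(n/2) * ((Nat.factorial (n/2) : ℂ) * 2^(n/2))
        = ((fpfInv (Fin n)).card * ((Nat.factorial (n/2) : ℂ) * 2^(n/2))) * (-1)^(n/2) := by
          ring
      _ = (-1 : ℂ)^(n/2) * (Nat.factorial n : ℂ) := by
          rw [show ((fpfInv (Fin n)).card * ((Nat.factorial (n/2) : ℂ) * 2^(n/2)))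
            = (Nat.factorial n : ℂ) from by push_cast [← hN]; ring]
          ring
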